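/- For the steplike dyadic tree Υ₂^∞, every ball satisfies r ≤ |B(x,r)| ≤ 24r for all vertices x and integers r ≥ 1. -/

import Mathlib

open scoped ENNReal

noncomputable def ballCard {V : Type*} (G : SimpleGraph V) (x : V) (r : ℕ) : ℕ :=
  {y | G.dist x y ≤ r}.ncard

/-- Vertices of the steplike dyadic tree `Υ₂^∞`: the half-line `{(j,0) : j ≥ 1}` together
with a tooth `{(2^n,k) : 0 ≤ k ≤ 2^n}` above each power of two. -/
def DyadV : Type := {p : ℕ × ℕ // 1 ≤ p.1 ∧ (p.2 = 0 ∨ (p.2 ≤ p.1 ∧ ∃ n : ℕ, p.1 = 2 ^ n))}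

/-- The steplike dyadic tree `Υ₂^∞`. -/
def dyad : SimpleGraph DyadV :=
  SimpleGraph.fromRel (fun p q =>
    (p.1.1 = q.1.1 + 1 ∧ p.1.2 = 0 ∧ q.1.2 = 0) ∨ (p.1.1 = q.1.1 ∧ p.1.2 = q.1.2 + 1))

lemma dyad_adj_iff {p q : DyadV} : dyad.Adj p q ↔ p ≠ q ∧
    (((p.1.1 = q.1.1 + 1 ∧ p.1.2 = 0 ∧ q.1.2 = 0) ∨ (p.1.1 = q.1.1 ∧ p.1.2 = q.1.2 + 1)) ∨
     ((q.1.1 = p.1.1 + 1 ∧ q.1.2 = 0 ∧ p.1.2 = 0) ∨ (q.1.1 = p.1.1 ∧ q.1.2 = p.1.2 + 1))) := by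
  simp [dyad, SimpleGraph.fromRel_adj]

lemma dyadV_ne {p q : DyadV} (h : p.1 ≠ q.1) : p ≠ q := fun h' => h (by rw [h'])

noncomputable instance : DecidableEq DyadV := Classical.decEq _

lemma dyadV_mk_ne {p q : ℕ × ℕ} {hp hq} (h : p ≠ q) :
    (⟨p, hp⟩ : DyadV) ≠ ⟨q, hq⟩ := fun he => h (congrArg Subtype.val he)

lemma adj_coord {p q : DyadV} (h : dyad.Adj p q) :
    Nat.dist p.1.1 q.1.1 ≤ 1 ∧ Nat.dist p.1.2 q.1.2 ≤ 1 := by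
  rcases (dyad_adj_iff.mp h).2 with (⟨h1,h2,h3⟩|⟨h1,h2⟩)|(⟨h1,h2,h3⟩|⟨h1,h2⟩) <;>
    simp [Nat.dist] <;> omega

lemma walk_coord {p q : DyadV} (w : dyad.Walk p q) :
    Nat.dist p.1.1 q.1.1 ≤ w.length ∧ Nat.dist p.1.2 q.1.2 ≤ w.length := by
  induction w with
  | nil => simp
  | @cons u v z h w ih =>
    obtain ⟨h1, h2⟩ := adj_coord h
    simp only [SimpleGraph.Walk.length_cons]
    refine ⟨le_trans (Nat.dist.triangle_inequality _ v.1.1 _) ?_,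
      le_trans (Nat.dist.triangle_inequality _ v.1.2 _) ?_⟩ <;> omega

lemma valid_down (x : DyadV) (i : ℕ) :
    1 ≤ x.1.1 ∧ (x.1.2 - i = 0 ∨ (x.1.2 - i ≤ x.1.1 ∧ ∃ n : ℕ, x.1.1 = 2 ^ n)) := by
  obtain ⟨h1, h2 | ⟨h2, h3⟩⟩ := x.2
  · exact ⟨h1, Or.inl (by omega)⟩
  · exact ⟨h1, Or.inr ⟨by omega, h3⟩⟩

def base : DyadV := ⟨(1, 0), by norm_num⟩

lemma reach_down (x : DyadV) :
    dyad.Reachable x ⟨(x.1.1, 0), ⟨x.2.1, Or.inl rfl⟩⟩ := by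
  obtain ⟨⟨j, k⟩, hx⟩ := x
  induction k with
  | zero => exact SimpleGraph.Reachable.refl _
  | succ k ih =>
    have hk : (1:ℕ) ≤ j ∧ ((k:ℕ) = 0 ∨ (k ≤ j ∧ ∃ n : ℕ, j = 2 ^ n)) := by
      obtain ⟨h1, h2 | ⟨h2, h3⟩⟩ := hx
      · omega
      · exact ⟨h1, Or.inr ⟨by omega, h3⟩⟩
    have hadj : dyad.Adj ⟨(j, k+1), hx⟩ ⟨(j, k), hk⟩ := by
      apply dyad_adj_iff.mpr
      exact ⟨dyadV_ne (by simp), Or.inl (Or.inr ⟨rfl, rfl⟩)⟩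
    exact (hadj.reachable).trans (ih hk)

lemma reach_base (j : ℕ) (hj : 1 ≤ j) (h : 1 ≤ j ∧ ((0:ℕ) = 0 ∨ ((0:ℕ) ≤ j ∧ ∃ n : ℕ, j = 2 ^ n))) :
    dyad.Reachable ⟨(j, 0), h⟩ base := by
  induction j, hj using Nat.le_induction with
  | base => exact SimpleGraph.Reachable.refl _
  | succ j hj ih =>
    have hj' : (1:ℕ) ≤ j ∧ ((0:ℕ) = 0 ∨ ((0:ℕ) ≤ j ∧ ∃ n : ℕ, j = 2 ^ n)) := ⟨hj, Or.inl rfl⟩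
    have hadj : dyad.Adj ⟨(j+1, 0), h⟩ ⟨(j, 0), hj'⟩ := by
      apply dyad_adj_iff.mpr
      exact ⟨dyadV_ne (by simp), Or.inl (Or.inl ⟨rfl, rfl, rfl⟩)⟩
    exact (hadj.reachable).trans (ih hj')

lemma dyad_connected : dyad.Connected := by
  rw [SimpleGraph.connected_iff]
  refine ⟨fun u v => ?_, ⟨base⟩⟩
  have hu := (reach_down u).trans (reach_base u.1.1 u.2.1 _)
  have hv := (reach_down v).trans (reach_base v.1.1 v.2.1 _)
  exact hu.trans hv.symm

lemma coord_le_dist (p q : DyadV) :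
    Nat.dist p.1.1 q.1.1 ≤ dyad.dist p q ∧ Nat.dist p.1.2 q.1.2 ≤ dyad.dist p q := by
  obtain ⟨w, hw⟩ := dyad_connected.exists_walk_length_eq_dist p q
  rw [← hw]; exact walk_coord w

lemma pow_if_sum (c : ℕ) : ∀ N : ℕ,
    (∑ n ∈ Finset.range N, if 2^n ≤ c then 2^n else 0) ≤ 2^N - 1 ∧
    (∑ n ∈ Finset.range N, if 2^n ≤ c then 2^n else 0) ≤ 2*c - 1 := by
  intro N
  induction N with
  | zero => simp
  | succ N ih =>
    rw [Finset.sum_range_succ]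
    have hp : (2:ℕ)^(N+1) = 2*2^N := by ring
    have hp1 : (1:ℕ) ≤ 2^N := Nat.one_le_two_pow
    by_cases h : 2^N ≤ c
    · rw [if_pos h]; omega
    · rw [if_neg h]; omega

theorem stmt15 : ∀ (x : DyadV) (r : ℕ), 1 ≤ r →
    r ≤ ballCard dyad x r ∧ ballCard dyad x r ≤ 24 * r := by
  intro x r hr
  obtain ⟨⟨a, b⟩, hx⟩ := x
  set x : DyadV := ⟨(a, b), hx⟩ with hxdef
  have ha : 1 ≤ a := hx.1
  set S : Set DyadV := {y | dyad.dist x y ≤ r} with hSdef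
  have hball : ballCard dyad x r = S.ncard := rfl
  -- the covering finset
  set A : Finset (ℕ × ℕ) := (Finset.Icc (a - r) (a + r)).image (fun j => (j, 0)) with hA
  set B : Finset (ℕ × ℕ) := (Finset.range (2*r+1)).biUnion
      (fun n => if 2^n ≤ 2*r then (Finset.Icc 1 (2^n)).image (fun k => ((2^n : ℕ), k)) else ∅)
      with hB
  set C : Finset (ℕ × ℕ) :=
      ((Finset.Icc (a - r) (a + r)).filter (fun j => 2*r < j ∧ j = 2 ^ Nat.log 2 j)) ×ˢ
        (Finset.Icc (b - r) (b + r)) with hC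
  -- containment of the ball in the covering set
  have hsub : Subtype.val '' S ⊆ ↑(A ∪ B ∪ C) := by
    rintro _ ⟨⟨⟨j, k⟩, hy⟩, hyS, rfl⟩
    have hdS : dyad.dist x ⟨(j, k), hy⟩ ≤ r := hyS
    obtain ⟨hd1, hd2⟩ := coord_le_dist x ⟨(j, k), hy⟩
    have hj : a - r ≤ j ∧ j ≤ a + r := by
      have := le_trans hd1 hdS; simp [Nat.dist, hxdef] at this; omega
    have hk : b - r ≤ k ∧ k ≤ b + r := by
      have := le_trans hd2 hdS; simp [Nat.dist, hxdef] at this; omega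
    simp only [Finset.coe_union, Set.mem_union, Finset.mem_coe]
    rcases hy.2 with h0 | ⟨hkj, n, hn⟩
    · refine Or.inl (Or.inl ?_)
      simp only [hA, Finset.mem_image, Finset.mem_Icc]
      have h0' : k = 0 := h0
      subst h0'
      exact ⟨j, ⟨hj.1, hj.2⟩, rfl⟩
    · by_cases hk1 : k = 0
      · subst hk1
        refine Or.inl (Or.inl ?_)
        simp only [hA, Finset.mem_image, Finset.mem_Icc]
        exact ⟨j, ⟨hj.1, hj.2⟩, rfl⟩
      · subst hn
        by_cases hj2 : 2^n ≤ 2*r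
        · refine Or.inl (Or.inr ?_)
          simp only [hB, Finset.mem_biUnion, Finset.mem_range]
          refine ⟨n, ?_, ?_⟩
          · have := Nat.lt_two_pow_self (n := n); omega
          · rw [if_pos hj2]
            simp only [Finset.mem_image, Finset.mem_Icc]
            exact ⟨k, ⟨Nat.pos_of_ne_zero hk1, hkj⟩, rfl⟩
        · refine Or.inr ?_
          simp only [hC, Finset.mem_product, Finset.mem_filter, Finset.mem_Icc]
          refine ⟨⟨⟨hj.1, hj.2⟩, by omega, ?_⟩, hk.1, hk.2⟩
          rw [Nat.log_pow (by norm_num)]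
    -- end hsub
  have hTfin : (↑(A ∪ B ∪ C) : Set (ℕ × ℕ)).Finite := (A ∪ B ∪ C).finite_toSet
  have hSfin : S.Finite :=
    Set.Finite.of_finite_image (Set.Finite.subset hTfin hsub)
      Subtype.val_injective.injOn
  -- upper bound
  have hupper : S.ncard ≤ 24 * r := by
    have h1 : S.ncard = (Subtype.val '' S).ncard :=
      (Set.ncard_image_of_injective S Subtype.val_injective).symm
    have h2 : (Subtype.val '' S).ncard ≤ (↑(A ∪ B ∪ C) : Set (ℕ × ℕ)).ncard :=
      Set.ncard_le_ncard hsub hTfin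
    rw [Set.ncard_coe_finset] at h2
    have hcard : (A ∪ B ∪ C).card ≤ A.card + B.card + C.card :=
      le_trans (Finset.card_union_le _ _)
        (by have := Finset.card_union_le A B; omega)
    have hAcard : A.card ≤ 2*r + 1 := by
      refine le_trans (Finset.card_image_le) ?_
      rw [Nat.card_Icc]; omega
    have hBcard : B.card ≤ 2*(2*r) - 1 := by
      refine le_trans (Finset.card_biUnion_le) ?_
      refine le_trans (Finset.sum_le_sum (fun n _ => ?_)) (pow_if_sum (2*r) (2*r+1)).2
      by_cases h : 2^n ≤ 2*r
      · rw [if_pos h, if_pos h]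
        refine le_trans Finset.card_image_le ?_
        rw [Nat.card_Icc]
        exact le_of_eq (Nat.add_sub_cancel _ _)
      · rw [if_neg h, if_neg h]; simp
    have hCcard : C.card ≤ 2*r + 1 := by
      rw [hC, Finset.card_product]
      have hone : ((Finset.Icc (a - r) (a + r)).filter
          (fun j => 2*r < j ∧ j = 2 ^ Nat.log 2 j)).card ≤ 1 := by
        rw [Finset.card_le_one]
        intro j1 h1 j2 h2
        simp only [Finset.mem_filter, Finset.mem_Icc] at h1 h2
        obtain ⟨⟨hj1a, hj1b⟩, hj1c, hj1d⟩ := h1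
        obtain ⟨⟨hj2a, hj2b⟩, hj2c, hj2d⟩ := h2
        rcases Nat.lt_trichotomy (Nat.log 2 j1) (Nat.log 2 j2) with hlt | heq | hgt
        · have : 2 * j1 ≤ j2 := by
            calc 2 * j1 = 2 ^ (Nat.log 2 j1 + 1) := by rw [pow_succ]; omega
              _ ≤ 2 ^ (Nat.log 2 j2) := Nat.pow_le_pow_right (by norm_num) hlt
              _ = j2 := hj2d.symm
          omega
        · rw [hj1d, hj2d, heq]
        · have : 2 * j2 ≤ j1 := by
            calc 2 * j2 = 2 ^ (Nat.log 2 j2 + 1) := by rw [pow_succ]; omega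
              _ ≤ 2 ^ (Nat.log 2 j1) := Nat.pow_le_pow_right (by norm_num) hgt
              _ = j1 := hj1d.symm
          omega
      have hicc : (Finset.Icc (b - r) (b + r)).card ≤ 2*r + 1 := by
        rw [Nat.card_Icc]; omega
      calc _ ≤ 1 * (2*r+1) := Nat.mul_le_mul hone hicc
        _ = 2*r + 1 := by omega
    omega
  -- lower bound
  have hlower : r ≤ S.ncard := by
    set f : ℕ → DyadV := fun i =>
      if h : i ≤ b then ⟨(a, b - i), valid_down x i⟩
      else ⟨(a + (i - b), 0), ⟨by omega, Or.inl rfl⟩⟩ with hf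
    have hf0 : f 0 = x := by
      rw [hf]; simp only [Nat.zero_le, dif_pos]
      exact Subtype.ext (by simp [hxdef])
    have hfp : ∀ i (h : i ≤ b), f i = ⟨(a, b - i), valid_down x i⟩ := fun i h => dif_pos h
    have hfn : ∀ i (h : ¬ i ≤ b), f i = ⟨(a + (i - b), 0), ⟨by omega, Or.inl rfl⟩⟩ :=
      fun i h => dif_neg h
    have hadj : ∀ i, dyad.Adj (f i) (f (i+1)) := by
      intro i
      by_cases h1 : i + 1 ≤ b
      · have h2 : i ≤ b := by omega
        rw [hfp i h2, hfp (i+1) h1]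
        apply dyad_adj_iff.mpr
        refine ⟨dyadV_mk_ne (by simp only [ne_eq, Prod.mk.injEq, not_and]; omega),
          Or.inl (Or.inr ⟨rfl, show b - i = (b - (i+1)) + 1 by omega⟩)⟩
      · by_cases h2 : i ≤ b
        · rw [hfp i h2, hfn (i+1) h1]
          apply dyad_adj_iff.mpr
          refine ⟨dyadV_mk_ne (by simp only [ne_eq, Prod.mk.injEq, not_and]; omega),
            Or.inr (Or.inl ⟨show a + (i+1-b) = a + 1 by omega, rfl, show b - i = 0 by omega⟩)⟩
        · rw [hfn i h2, hfn (i+1) h1]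
          apply dyad_adj_iff.mpr
          refine ⟨dyadV_mk_ne (by simp only [ne_eq, Prod.mk.injEq, not_and]; omega),
            Or.inr (Or.inl ⟨show a + (i+1-b) = a + (i-b) + 1 by omega, rfl, rfl⟩)⟩
    have hdistf : ∀ i, dyad.dist x (f i) ≤ i := by
      intro i
      induction i with
      | zero => rw [hf0]; simp
      | succ i ih =>
        have h1 : dyad.dist (f i) (f (i+1)) ≤ 1 := by
          have := SimpleGraph.dist_le (SimpleGraph.Walk.cons (hadj i) SimpleGraph.Walk.nil)
          simpa using this
        have := dyad_connected.dist_triangle (u := x) (v := f i) (w := f (i+1))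
        omega
    have hfinj : Function.Injective f := by
      intro i j h
      by_cases hi : i ≤ b <;> by_cases hj' : j ≤ b <;>
        simp only [hfp, hfn, hi, hj', not_false_iff] at h <;>
        [skip; skip; skip; skip] <;>
        first
        | (have h2 : ((a, b - i) : ℕ × ℕ) = (a, b - j) := congrArg Subtype.val h
           rw [Prod.mk.injEq] at h2; omega)
        | (have h2 : ((a, b - i) : ℕ × ℕ) = (a + (j - b), 0) := congrArg Subtype.val h
           rw [Prod.mk.injEq] at h2; omega)
        | (have h2 : ((a + (i - b), 0) : ℕ × ℕ) = (a, b - j) := congrArg Subtype.val h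
           rw [Prod.mk.injEq] at h2; omega)
        | (have h2 : ((a + (i - b), 0) : ℕ × ℕ) = (a + (j - b), 0) := congrArg Subtype.val h
           rw [Prod.mk.injEq] at h2; omega)
    have hsub2 : ↑((Finset.range (r+1)).image f) ⊆ S := by
      intro y hy
      simp only [Finset.coe_image, Set.mem_image, Finset.coe_range, Set.mem_Iio] at hy
      obtain ⟨i, hi, rfl⟩ := hy
      exact le_trans (hdistf i) (by omega)
    have : ((Finset.range (r+1)).image f).card = r + 1 := by
      rw [Finset.card_image_of_injective _ hfinj, Finset.card_range]
    calc r ≤ r + 1 := by omega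
      _ = (↑((Finset.range (r+1)).image f) : Set DyadV).ncard := by
          rw [Set.ncard_coe_finset, this]
      _ ≤ S.ncard := Set.ncard_le_ncard hsub2 hSfin
  rw [hball]
  exact ⟨hlower, hupper⟩
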